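/- Let G be a group, (H, f) a G-group, and x ∈ H with x ≠ 1 such that the subgroup G(x) of H is nilpotent (as a group). Then x is a T1-divisor of zero of (H, f). -/

import Mathlib

/-- The subgroup `G(x)` of `H` generated by the `G`-conjugates `f g * x * (f g)⁻¹` of `x`. -/
def GConj {G H : Type*} [Group G] [Group H] (f : G →* H) (x : H) : Subgroup H :=
  Subgroup.closure {h : H | ∃ g : G, h = f g * x * (f g)⁻¹}

/-- `x` is a T1-divisor of zero of the `G`-group `(H, f)`. -/
def IsT1DivisorOfZero {G H : Type*} [Group G] [Group H] (f : G →* H) (x : H) : Prop :=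
  x ≠ 1 ∧ ∃ y : H, y ≠ 1 ∧ ⁅GConj f x, GConj f y⁆ = ⊥

/-- `x` is a T2-divisor of zero of the `G`-group `(H, f)`. -/
def IsT2DivisorOfZero {G H : Type*} [Group G] [Group H] (f : G →* H) (x : H) : Prop :=
  x ≠ 1 ∧ ∃ y : H, y ≠ 1 ∧ GConj f x ⊓ GConj f y = ⊥

/-- `I` is a T1-prime ideal of the `G`-group `(H, f)`: a normal subgroup, distinct from `H`,
such that `⁅G(x), G(y)⁆ ⊆ I` implies `x ∈ I` or `y ∈ I`. -/
def IsT1Prime {G H : Type*} [Group G] [Group H] (f : G →* H) (I : Subgroup H) : Prop :=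
  I.Normal ∧ I ≠ ⊤ ∧ ∀ x y : H, ⁅GConj f x, GConj f y⁆ ≤ I → x ∈ I ∨ y ∈ I

/-- `I` is a T2-prime ideal of the `G`-group `(H, f)`: a normal subgroup, distinct from `H`,
such that `G(x) ∩ G(y) ⊆ I` implies `x ∈ I` or `y ∈ I`. -/
def IsT2Prime {G H : Type*} [Group G] [Group H] (f : G →* H) (I : Subgroup H) : Prop :=
  I.Normal ∧ I ≠ ⊤ ∧ ∀ x y : H, GConj f x ⊓ GConj f y ≤ I → x ∈ I ∨ y ∈ I

/-- The T1-spectrum of the `G`-group `(H, f)`: the type of T1-prime ideals. -/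
abbrev Spec1 {G H : Type*} [Group G] [Group H] (f : G →* H) : Type _ :=
  {P : Subgroup H // IsT1Prime f P}

/-- The T2-spectrum of the `G`-group `(H, f)`: the type of T2-prime ideals. -/
abbrev Spec2 {G H : Type*} [Group G] [Group H] (f : G →* H) : Type _ :=
  {P : Subgroup H // IsT2Prime f P}

/-- `V¹_H(I)`: the set of T1-prime ideals containing `I`. -/
def V1 {G H : Type*} [Group G] [Group H] (f : G →* H) (I : Subgroup H) : Set (Spec1 f) :=
  {P | I ≤ P.val}

/-- `V²_H(I)`: the set of T2-prime ideals containing `I`. -/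
def V2 {G H : Type*} [Group G] [Group H] (f : G →* H) (I : Subgroup H) : Set (Spec2 f) :=
  {P | I ≤ P.val}

lemma center_ne_bot_of_nilpotent {K : Type*} [Group K] [Nontrivial K]
    (h : Group.IsNilpotent K) : Subgroup.center K ≠ ⊥ := by
  intro hc
  have hall : ∀ n, Subgroup.upperCentralSeries K n = ⊥ := by
    intro n
    induction n with
    | zero => simp
    | succ n ih =>
      ext z
      simp only [mem_upperCentralSeries_succ_iff, ih, Subgroup.mem_bot]
      constructor
      · intro hz
        have : z ∈ Subgroup.center K := by
          rw [Subgroup.mem_center_iff]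
          intro y
          have hzy := hz y
          rw [commutatorElement_def, mul_inv_eq_one, mul_inv_eq_iff_eq_mul] at hzy
          exact hzy.symm
        rw [hc] at this; exact this
      · rintro rfl y; simp
  obtain ⟨n, hn⟩ := h
  obtain ⟨a, b, hab⟩ := exists_pair_ne K
  have := hall n
  rw [hn] at this
  have ha : a ∈ (⊥ : Subgroup K) := this ▸ Subgroup.mem_top a
  have hb : b ∈ (⊥ : Subgroup K) := this ▸ Subgroup.mem_top b
  rw [Subgroup.mem_bot] at ha hb
  exact hab (ha.trans hb.symm)

lemma GConj.conj_mem {G H : Type*} [Group G] [Group H] (f : G →* H) (x : H)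
    (g : G) {k : H} (hk : k ∈ GConj f x) : f g * k * (f g)⁻¹ ∈ GConj f x := by
  induction hk using Subgroup.closure_induction with
  | mem h hh =>
    obtain ⟨g', rfl⟩ := hh
    apply Subgroup.subset_closure
    exact ⟨g * g', by simp [mul_assoc]⟩
  | one => simpa using Subgroup.one_mem _
  | mul a b _ _ ha hb =>
    have : f g * (a * b) * (f g)⁻¹ = (f g * a * (f g)⁻¹) * (f g * b * (f g)⁻¹) := by
      group
    rw [this]; exact Subgroup.mul_mem _ ha hb
  | inv a _ ha =>
    have : f g * a⁻¹ * (f g)⁻¹ = (f g * a * (f g)⁻¹)⁻¹ := by group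
    rw [this]; exact Subgroup.inv_mem _ ha

theorem nilpotent_elem_is_t1_divisor {G H : Type*} [Group G] [Group H] (f : G →* H)
    (x : H) (hx : x ≠ 1) (hnil : Group.IsNilpotent (GConj f x)) :
    IsT1DivisorOfZero f x := by
  set K := GConj f x with hK
  have hxK : x ∈ K := Subgroup.subset_closure ⟨1, by simp⟩
  have : Nontrivial K := ⟨⟨⟨x, hxK⟩, 1, by simpa using hx⟩⟩
  have hcenter := center_ne_bot_of_nilpotent hnil
  obtain ⟨y0, hy0⟩ := Subgroup.ne_bot_iff_exists_ne_one.mp hcenter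
  set y' : K := (y0 : K) with hy'def
  have hy'mem : y' ∈ Subgroup.center K := y0.2
  have hy'ne : y' ≠ 1 := by
    intro h1
    exact hy0 (by ext; exact congrArg Subtype.val h1)
  set y : H := (y' : H) with hy
  have hyne : y ≠ 1 := by
    intro h1
    exact hy'ne (Subtype.ext h1)
  -- y commutes with every element of K (in H)
  have hycomm : ∀ k ∈ K, y * k = k * y := by
    intro k hk
    have := (Subgroup.mem_center_iff.mp hy'mem) ⟨k, hk⟩
    exact congrArg Subtype.val this |>.symm
  -- every generator of GConj f y centralizes K
  have hgen : ∀ z ∈ {h : H | ∃ g : G, h = f g * y * (f g)⁻¹}, ∀ k ∈ K, z * k = k * z := by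
    rintro z ⟨g, rfl⟩ k hk
    have hk' : (f g)⁻¹ * k * f g ∈ K := by
      have := GConj.conj_mem f x g⁻¹ hk
      simpa using this
    have hcy := hycomm _ hk'
    calc f g * y * (f g)⁻¹ * k = f g * (y * ((f g)⁻¹ * k * f g)) * (f g)⁻¹ := by group
      _ = f g * (((f g)⁻¹ * k * f g) * y) * (f g)⁻¹ := by rw [hcy]
      _ = k * (f g * y * (f g)⁻¹) := by group
  refine ⟨hx, y, hyne, ?_⟩
  rw [Subgroup.commutator_eq_bot_iff_le_centralizer]
  intro k hk
  rw [Subgroup.mem_centralizer_iff]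
  intro z hz
  induction hz using Subgroup.closure_induction with
  | mem h hh => exact hgen h hh k hk
  | one => simp
  | mul a b _ _ ha hb => rw [mul_assoc, hb, ← mul_assoc, ha, mul_assoc]
  | inv a _ ha =>
    have : a * k = k * a := ha
    calc a⁻¹ * k = a⁻¹ * k * a * a⁻¹ := by group
      _ = a⁻¹ * (a * k) * a⁻¹ := by rw [this]; group
      _ = k * a⁻¹ := by group
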